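/- Let A be a unital ring, J ⊆ A a two-sided ideal, and let a, e₀ ∈ A satisfy 1 − e₀ a ∈ J and 1 − a e₀ ∈ J. Set s = 1 − e₀ a and e = (1 + s + s² + ⋯ + s^{N−1}) e₀. Then 1 − e a ∈ Jᴺ and 1 − a e ∈ Jᴺ. -/
import Mathlib


/-- Let `A` be a unital ring, `J ⊆ A` a two-sided ideal (encoded as a
`ℤ`-submodule closed under left and right multiplication), and let `a, e₀ ∈ A` satisfy
`1 − e₀ a ∈ J` and `1 − a e₀ ∈ J`. Set `s = 1 − e₀ a` and
`e = (1 + s + s² + ⋯ + s^{N−1}) e₀`. Then `1 − e a ∈ Jᴺ` and `1 − a e ∈ Jᴺ`,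
where `Jᴺ` is the (two-sided, since `J` is) ideal generated by `N`-fold products of
elements of `J`, i.e. the `N`-th power of the submodule `J`. -/
theorem stmt4 {A : Type*} [Ring A] (J : Submodule ℤ A)
    (hJl : ∀ x ∈ J, ∀ y : A, y * x ∈ J)
    (hJr : ∀ x ∈ J, ∀ y : A, x * y ∈ J)
    (a e₀ : A) (h₁ : 1 - e₀ * a ∈ J) (h₂ : 1 - a * e₀ ∈ J)
    (N : ℕ) (hN : 1 ≤ N)
    (s e : A) (hs : s = 1 - e₀ * a)
    (he : e = (∑ k ∈ Finset.range N, s ^ k) * e₀) :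
    1 - e * a ∈ J ^ N ∧ 1 - a * e ∈ J ^ N := by
  set t := 1 - a * e₀ with ht
  have h1 : 1 - e * a = s ^ N := by
    have := geom_sum_mul s N
    have hea : e * a = (∑ k ∈ Finset.range N, s ^ k) * (1 - s) := by
      rw [he, hs]; noncomm_ring
    rw [hea, ← neg_sub s 1, mul_neg, this, neg_sub, sub_sub_cancel]
  have hcomm : a * s = t * a := by rw [hs, ht]; noncomm_ring
  have hpow : ∀ k : ℕ, a * s ^ k = t ^ k * a := by
    intro k
    induction k with
    | zero => simp
    | succ n ih => rw [pow_succ, ← mul_assoc, ih, mul_assoc, hcomm, ← mul_assoc, ← pow_succ]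
  have h2 : 1 - a * e = t ^ N := by
    have hae : a * e = (∑ k ∈ Finset.range N, t ^ k) * (1 - t) := by
      rw [he, ← mul_assoc, Finset.mul_sum]
      simp_rw [hpow]
      rw [← Finset.sum_mul, mul_assoc]
      congr 1
      rw [ht]; noncomm_ring
    rw [hae, ← neg_sub t 1, mul_neg, geom_sum_mul, neg_sub, sub_sub_cancel]
  constructor
  · rw [h1, hs]; exact Submodule.pow_mem_pow J h₁ N
  · rw [h2, ht]; exact Submodule.pow_mem_pow J h₂ N
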